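/- Let G be a group with subgroups A, B ≤ G such that B normalizes A, A ∩ B = {e}, and G = AB (inner semidirect product G = [AB]). Then for every atomic subset S ⊆ G, the subgroup ⟨S⟩ ∩ B equals ⟨S ∩ B⟩, the subgroup generated by the elements of S lying in B. -/

import Mathlib

open scoped Pointwise


/-- Let `G = [AB]` be an inner semidirect product of subgroups `A, B ≤ G`.
Then for every atomic subset `S ⊆ G`, the subgroup `⟨S⟩ ∩ B` equals `⟨S ∩ B⟩`. -/
theorem stmt_3 {G : Type*} [Group G] (A B : Subgroup G)
    (hnorm : B ≤ Subgroup.normalizer (A : Set G))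
    (hint : A ⊓ B = ⊥)
    (hprod : ∀ g : G, ∃ a ∈ A, ∃ b ∈ B, g = a * b)
    (S : Set G) (hS : S ⊆ (A : Set G) ∪ (B : Set G)) :
    Subgroup.closure S ⊓ B = Subgroup.closure (S ∩ (B : Set G)) := by
  have hA : A.Normal := by
    rw [← Subgroup.normalizer_eq_top_iff]
    rw [eq_top_iff]
    intro g _
    obtain ⟨a, ha, b, hb, rfl⟩ := hprod g
    exact mul_mem (Subgroup.le_normalizer ha) (hnorm hb)
  set C := Subgroup.closure (S ∩ (B : Set G)) with hC
  have hCB : C ≤ B := (Subgroup.closure_le B).2 fun x hx => hx.2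
  apply le_antisymm
  · rintro g ⟨hg, hgB⟩
    have hsub : Subgroup.closure S ≤ A ⊔ C := by
      apply (Subgroup.closure_le _).2
      intro s hs
      rcases hS hs with h | h
      · exact Subgroup.mem_sup_left h
      · exact Subgroup.mem_sup_right (Subgroup.subset_closure ⟨hs, h⟩)
    have hmem : g ∈ ((A : Set G) * (C : Set G)) := by
      rw [← Subgroup.normal_mul]; exact hsub hg
    obtain ⟨a, ha, c, hc, rfl⟩ := hmem
    have haB : a ∈ B := by
      have : a = (a * c) * c⁻¹ := by group
      rw [this]
      exact mul_mem hgB (inv_mem (hCB hc))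
    have : a ∈ A ⊓ B := ⟨ha, haB⟩
    rw [hint, Subgroup.mem_bot] at this
    simpa [this] using hc
  · refine le_inf ?_ hCB
    exact Subgroup.closure_mono (Set.inter_subset_left)
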